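/- arXiv:2211.12236 — 3 statements merged into one kernel-verified Lean document; each statement's English description precedes it below -/
import Mathlib

section
/- Let B be a Banach space of holomorphic functions on a domain Ω with bounded point evaluations K_z. If (z_k) ⊆ Ω is a sequence converging to a point w ∈ Ω, then ‖K_{z_k} − K_w‖ → 0 in the norm of B*. -/
open Filter Topology Metric Set

/-- If (z_k) ⊆ Ω converges to w ∈ Ω, then the evaluation functionals
converge in operator norm: ‖K_{z_k} − K_w‖ → 0. -/
theorem stmt_5 {n : ℕ} (Ω : Set (Fin n → ℂ)) (hΩ : IsOpen Ω) (hconn : IsConnected Ω)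
    (B : Type*) [NormedAddCommGroup B] [NormedSpace ℂ B] [CompleteSpace B]
    (ev : B →ₗ[ℂ] ((Fin n → ℂ) → ℂ))
    (hHol : ∀ f : B, DifferentiableOn ℂ (ev f) Ω)
    (K : (Fin n → ℂ) → (B →L[ℂ] ℂ))
    (hK : ∀ z ∈ Ω, ∀ f : B, K z f = ev f z)
    (z : ℕ → (Fin n → ℂ)) (hz : ∀ k, z k ∈ Ω)
    (w : Fin n → ℂ) (hw : w ∈ Ω) (hconv : Tendsto z atTop (nhds w)) :
    Tendsto (fun k => ‖K (z k) - K w‖) atTop (nhds 0) := by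
  -- Find a closed ball around w inside Ω
  obtain ⟨ε, hε, hball⟩ := Metric.isOpen_iff.mp hΩ w hw
  set r : ℝ := ε / 2 with hr_def
  have hr : 0 < r := by positivity
  have hcb : closedBall w r ⊆ Ω := fun x hx =>
    hball (mem_ball.mpr (lt_of_le_of_lt (mem_closedBall.mp hx) (by rw [hr_def]; linarith)))
  -- Banach–Steinhaus: uniform bound M on the closed ball
  obtain ⟨M, hM⟩ : ∃ M, ∀ i : closedBall w r, ‖K i‖ ≤ M := by
    apply banach_steinhaus
    intro f
    obtain ⟨C, hC⟩ := (isCompact_closedBall w r).exists_bound_of_continuousOn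
      (((hHol f).continuousOn).mono hcb)
    exact ⟨C, fun i => by rw [hK i (hcb i.2) f]; exact hC i i.2⟩
  have hM0 : 0 ≤ M := le_trans (norm_nonneg _) (hM ⟨w, mem_closedBall_self hr.le⟩)
  -- Key estimate via the Schwarz lemma
  have key : ∀ ζ ∈ ball w r, ‖K ζ - K w‖ ≤ (2 * M + 1) / r * dist ζ w := by
    intro ζ hζ
    apply ContinuousLinearMap.opNorm_le_bound _ (by positivity)
    intro f
    rcases eq_or_ne f 0 with rfl | hf0
    · simp
    rcases eq_or_ne ζ w with rfl | hζw
    · simp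
    have hfpos : 0 < ‖f‖ := norm_pos_iff.mpr hf0
    set d : ℝ := dist ζ w with hd_def
    have hd0 : 0 < d := dist_pos.mpr hζw
    have hdr : d < r := by simpa using hζ
    set g : ℂ → ℂ := fun t => ev f (w + t • (ζ - w)) with hg_def
    set R₁ : ℝ := r / d with hR₁_def
    have hR₁ : 1 < R₁ := (one_lt_div hd0).mpr hdr
    -- the affine map sends ball 0 R₁ into ball w r ⊆ Ω
    have hmaps : ∀ t : ℂ, t ∈ ball (0 : ℂ) R₁ → (w + t • (ζ - w)) ∈ ball w r := by
      intro t ht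
      simp only [mem_ball, dist_eq_norm] at ht ⊢
      have : ‖w + t • (ζ - w) - w‖ = ‖t‖ * ‖ζ - w‖ := by
        rw [add_sub_cancel_left, norm_smul]
      rw [this]
      have hzw : ‖ζ - w‖ = d := by rw [hd_def, dist_eq_norm]
      rw [hzw]
      calc ‖t‖ * d < R₁ * d := by
            apply mul_lt_mul_of_pos_right _ hd0
            simpa using ht
        _ = r := by rw [hR₁_def, div_mul_cancel₀ _ hd0.ne']
    have hgd : DifferentiableOn ℂ g (ball (0 : ℂ) R₁) := by
      apply (hHol f).comp
      · apply Differentiable.differentiableOn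
        exact (differentiable_const w).add ((differentiable_id).smul_const (ζ - w))
      · intro t ht
        exact (hcb (ball_subset_closedBall (hmaps t ht)))
    -- uniform bound on g
    have hgbound : ∀ t : ℂ, t ∈ ball (0 : ℂ) R₁ → ‖g t‖ ≤ M * ‖f‖ := by
      intro t ht
      have hmem := hmaps t ht
      have hmem' : (w + t • (ζ - w)) ∈ closedBall w r := ball_subset_closedBall hmem
      have : g t = K (w + t • (ζ - w)) f := (hK _ (hcb hmem') f).symm
      rw [this]
      calc ‖K (w + t • (ζ - w)) f‖ ≤ ‖K (w + t • (ζ - w))‖ * ‖f‖ :=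
            (K _).le_opNorm f
        _ ≤ M * ‖f‖ := mul_le_mul_of_nonneg_right (hM ⟨_, hmem'⟩) (norm_nonneg f)
    -- g maps the ball into a ball of radius (2M+1)‖f‖ around g 0
    have hmapsg : MapsTo g (ball (0 : ℂ) R₁) (ball (g 0) ((2 * M + 1) * ‖f‖)) := by
      intro t ht
      have h0 : (0 : ℂ) ∈ ball (0 : ℂ) R₁ := mem_ball_self (by linarith)
      have h1 := hgbound t ht
      have h2 := hgbound 0 h0
      simp only [mem_ball, dist_eq_norm]
      calc ‖g t - g 0‖ ≤ ‖g t‖ + ‖g 0‖ := norm_sub_le _ _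
        _ ≤ M * ‖f‖ + M * ‖f‖ := add_le_add h1 h2
        _ = 2 * M * ‖f‖ := by ring
        _ < (2 * M + 1) * ‖f‖ := by nlinarith
    have h1mem : (1 : ℂ) ∈ ball (0 : ℂ) R₁ := by
      simp only [mem_ball, dist_eq_norm, sub_zero, norm_one]
      exact hR₁
    have hschwarz := Complex.dist_le_div_mul_dist_of_mapsTo_ball hgd (hmapsg.mono_right ball_subset_closedBall) h1mem
    have hg1 : g 1 = ev f ζ := by simp [hg_def]
    have hg0 : g 0 = ev f w := by simp [hg_def]
    have hdist10 : dist (1 : ℂ) 0 = 1 := by simp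
    rw [hg1, hg0, hdist10, mul_one] at hschwarz
    have hlhs : ‖(K ζ - K w) f‖ = dist (ev f ζ) (ev f w) := by
      rw [ContinuousLinearMap.sub_apply, hK ζ (hcb (ball_subset_closedBall hζ)) f,
        hK w hw f, dist_eq_norm]
    rw [hlhs]
    calc dist (ev f ζ) (ev f w) ≤ (2 * M + 1) * ‖f‖ / R₁ := hschwarz
      _ = (2 * M + 1) / r * dist ζ w * ‖f‖ := by
          rw [hR₁_def]; field_simp; ring
  -- Conclude by squeezing
  have hdtend : Tendsto (fun k => dist (z k) w) atTop (nhds 0) :=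
    (tendsto_iff_dist_tendsto_zero).mp hconv
  have hCtend : Tendsto (fun k => (2 * M + 1) / r * dist (z k) w) atTop (nhds 0) := by
    simpa using hdtend.const_mul ((2 * M + 1) / r)
  have hev : ∀ᶠ k in atTop, z k ∈ ball w r :=
    hconv (ball_mem_nhds w hr)
  apply squeeze_zero' (Eventually.of_forall fun k => norm_nonneg _) _ hCtend
  filter_upwards [hev] with k hk
  exact key (z k) hk
end

section
/- Let Ω = {z ∈ ℂ : 0 < |z| < 1} be the punctured unit disc. Then every automorphism of Ω is a rotation: φ ∈ Aut(Ω) if and only if there exists λ ∈ ℂ with |λ| = 1 such that φ(z) = λz for all z ∈ Ω. -/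
open Set Metric Function Complex Topology

private lemma omega_eq : {z : ℂ | 0 < ‖z‖ ∧ ‖z‖ < 1} = ball (0:ℂ) 1 \ {0} := by
  ext z
  simp [mem_ball_zero_iff, norm_pos_iff, and_comm]

/-- Extension lemma: a holomorphic self-map of the punctured disc with a left inverse
extends to the full disc with values of norm `< 1`. -/
private lemma ext_lemma (φ ψ : ℂ → ℂ)
    (hφ : DifferentiableOn ℂ φ {z : ℂ | 0 < ‖z‖ ∧ ‖z‖ < 1})
    (hmap : Set.MapsTo φ {z : ℂ | 0 < ‖z‖ ∧ ‖z‖ < 1} {z : ℂ | 0 < ‖z‖ ∧ ‖z‖ < 1})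
    (hinv : ∀ z ∈ {z : ℂ | 0 < ‖z‖ ∧ ‖z‖ < 1}, ψ (φ z) = z) :
    ∃ F : ℂ → ℂ, DifferentiableOn ℂ F (ball 0 1) ∧
      (∀ z ∈ {z : ℂ | 0 < ‖z‖ ∧ ‖z‖ < 1}, F z = φ z) ∧
      ∀ z ∈ ball (0:ℂ) 1, ‖F z‖ < 1 := by
  set Ω : Set ℂ := {z : ℂ | 0 < ‖z‖ ∧ ‖z‖ < 1} with hΩ
  have hΩ' : Ω = ball (0:ℂ) 1 \ {0} := omega_eq
  have hmemΩ : ∀ z : ℂ, z ∈ ball (0:ℂ) 1 → z ≠ 0 → z ∈ Ω := by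
    intro z hz hz0
    rw [hΩ']; exact ⟨hz, hz0⟩
  have hball : ball (0:ℂ) 1 ∈ 𝓝 (0:ℂ) := isOpen_ball.mem_nhds (by simp)
  set F : ℂ → ℂ := update φ 0 (Filter.limUnder (𝓝[≠] (0:ℂ)) φ) with hF
  have hFeq : ∀ z ∈ Ω, F z = φ z := by
    intro z hz
    have hz0 : z ≠ 0 := by
      intro h; rw [h] at hz; simp [hΩ] at hz
    simp [hF, update_of_ne hz0]
  have hFd : DifferentiableOn ℂ F (ball 0 1) := by
    apply differentiableOn_update_limUnder_of_bddAbove hball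
    · rw [← hΩ']; exact hφ
    · refine ⟨1, ?_⟩
      rintro x ⟨z, hz, rfl⟩
      rw [← hΩ'] at hz
      exact le_of_lt (hmap hz).2
  -- F is continuous at 0
  have hFc : ContinuousAt F 0 := by
    have := (hFd.differentiableAt hball).continuousAt
    exact this
  have hle : ∀ z ∈ ball (0:ℂ) 1, ‖F z‖ ≤ 1 := by
    intro z hz
    rcases eq_or_ne z 0 with rfl | hz0
    · have h1 : ∀ᶠ w in 𝓝[≠] (0:ℂ), ‖F w‖ ≤ 1 := by
        filter_upwards [self_mem_nhdsWithin,
          nhdsWithin_le_nhds hball] with w hw1 hw2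
        have hwΩ : w ∈ Ω := hmemΩ w hw2 hw1
        rw [hFeq w hwΩ]
        exact le_of_lt (hmap hwΩ).2
      exact le_of_tendsto ((hFc.norm.tendsto).mono_left nhdsWithin_le_nhds) h1
    · have hzΩ : z ∈ Ω := hmemΩ z hz hz0
      rw [hFeq z hzΩ]
      exact le_of_lt (hmap hzΩ).2
  refine ⟨F, hFd, hFeq, ?_⟩
  intro z hz
  rcases eq_or_ne z 0 with rfl | hz0
  · -- if ‖F 0‖ = 1 then F is constant, contradicting injectivity
    by_contra hc
    push_neg at hc
    have h1 : ‖F 0‖ = 1 := le_antisymm (hle 0 (by simp)) hc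
    have hmax : IsMaxOn (norm ∘ F) (ball (0:ℂ) 1) 0 := by
      intro w hw
      simp only [comp_apply, h1]
      exact hle w hw
    have hconst := eqOn_of_isPreconnected_of_isMaxOn_norm
      (convex_ball (0:ℂ) 1).isPreconnected isOpen_ball hFd (by simp) hmax
    have hhalf : (1/2 : ℂ) ∈ Ω := by constructor <;> norm_num
    have hquarter : (1/4 : ℂ) ∈ Ω := by constructor <;> norm_num
    have c2 : F (1/2) = F 0 := hconst (by rw [hΩ'] at hhalf; exact hhalf.1)
    have c4 : F (1/4) = F 0 := hconst (by rw [hΩ'] at hquarter; exact hquarter.1)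
    have e1 : φ (1/2) = φ (1/4) := by
      rw [← hFeq _ hhalf, ← hFeq _ hquarter, c2, c4]
    have := hinv _ hhalf
    rw [e1, hinv _ hquarter] at this
    norm_num at this
  · have hwΩ : z ∈ Ω := hmemΩ z hz hz0
    rw [hFeq z hwΩ]
    exact (hmap hwΩ).2

/-- Every automorphism of the punctured unit disc
Ω = {z ∈ ℂ : 0 < |z| < 1} is a rotation: a holomorphic self-map φ of Ω is a
(biholomorphic) automorphism of Ω if and only if φ(z) = λz on Ω for some |λ| = 1. -/
theorem stmt_12 (φ : ℂ → ℂ) :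
    (DifferentiableOn ℂ φ {z : ℂ | 0 < ‖z‖ ∧ ‖z‖ < 1} ∧
      Set.MapsTo φ {z : ℂ | 0 < ‖z‖ ∧ ‖z‖ < 1} {z : ℂ | 0 < ‖z‖ ∧ ‖z‖ < 1} ∧
      ∃ ψ : ℂ → ℂ, DifferentiableOn ℂ ψ {z : ℂ | 0 < ‖z‖ ∧ ‖z‖ < 1} ∧
        Set.MapsTo ψ {z : ℂ | 0 < ‖z‖ ∧ ‖z‖ < 1} {z : ℂ | 0 < ‖z‖ ∧ ‖z‖ < 1} ∧
        (∀ z ∈ {z : ℂ | 0 < ‖z‖ ∧ ‖z‖ < 1}, ψ (φ z) = z) ∧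
        (∀ z ∈ {z : ℂ | 0 < ‖z‖ ∧ ‖z‖ < 1}, φ (ψ z) = z)) ↔
    ∃ lam : ℂ, ‖lam‖ = 1 ∧ ∀ z ∈ {z : ℂ | 0 < ‖z‖ ∧ ‖z‖ < 1}, φ z = lam * z := by
  set Ω : Set ℂ := {z : ℂ | 0 < ‖z‖ ∧ ‖z‖ < 1} with hΩdef
  have hΩ' : Ω = ball (0:ℂ) 1 \ {0} := omega_eq
  have hmemΩ : ∀ z : ℂ, z ∈ ball (0:ℂ) 1 → z ≠ 0 → z ∈ Ω := by
    intro z hz hz0; rw [hΩ']; exact ⟨hz, hz0⟩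
  have hball : ball (0:ℂ) 1 ∈ 𝓝 (0:ℂ) := isOpen_ball.mem_nhds (by simp)
  constructor
  · rintro ⟨hφd, hφm, ψ, hψd, hψm, hψφ, hφψ⟩
    obtain ⟨F, hFd, hFeq, hFlt⟩ := ext_lemma φ ψ hφd hφm hψφ
    obtain ⟨G, hGd, hGeq, hGlt⟩ := ext_lemma ψ φ hψd hψm hφψ
    -- key composition identity
    have hGF : ∀ z ∈ Ω, G (F z) = z := by
      intro z hz
      rw [hFeq z hz, hGeq _ (hφm hz), hψφ z hz]
    -- F 0 = 0
    have hF0 : F 0 = 0 := by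
      by_contra h0
      have hF0ball : F 0 ∈ ball (0:ℂ) 1 := mem_ball_zero_iff.2 (hFlt 0 (by simp))
      have hF0Ω : F 0 ∈ Ω := hmemΩ _ hF0ball h0
      have hGc : ContinuousAt G (F 0) := (hGd.differentiableAt
        (isOpen_ball.mem_nhds hF0ball)).continuousAt
      have hFc : ContinuousAt F 0 := (hFd.differentiableAt hball).continuousAt
      have ht1 : Filter.Tendsto (fun z => G (F z)) (𝓝[≠] (0:ℂ)) (𝓝 (G (F 0))) :=
        ((hGc.comp hFc).tendsto).mono_left nhdsWithin_le_nhds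
      have ht2 : Filter.Tendsto (fun z => G (F z)) (𝓝[≠] (0:ℂ)) (𝓝 0) := by
        have : ∀ᶠ z in 𝓝[≠] (0:ℂ), G (F z) = z := by
          filter_upwards [self_mem_nhdsWithin, nhdsWithin_le_nhds hball] with w hw1 hw2
          exact hGF w (hmemΩ w hw2 hw1)
        exact Filter.Tendsto.congr' (Filter.EventuallyEq.symm this)
          (Filter.tendsto_id.mono_left nhdsWithin_le_nhds)
      have heq : G (F 0) = 0 := tendsto_nhds_unique ht1 ht2
      rw [hGeq _ hF0Ω] at heq
      have := (hψm hF0Ω).1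
      rw [heq] at this
      simp at this
    -- Schwarz both ways
    have hFmaps : Set.MapsTo F (ball (0:ℂ) 1) (ball (0:ℂ) 1) := by
      intro z hz; exact mem_ball_zero_iff.2 (hFlt z hz)
    have hSchwarzF : ∀ z : ℂ, z ∈ ball (0:ℂ) 1 → ‖F z‖ ≤ ‖z‖ := by
      intro z hz
      have := Complex.norm_le_norm_of_mapsTo_ball hFd
        (hFmaps.mono_right ball_subset_closedBall) hF0 (mem_ball_zero_iff.1 hz)
      exact this
    have hGmaps : Set.MapsTo G (ball (0:ℂ) 1) (ball (0:ℂ) 1) := by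
      intro z hz; exact mem_ball_zero_iff.2 (hGlt z hz)
    -- G 0 = 0 (symmetric)
    have hFG : ∀ z ∈ Ω, F (G z) = z := by
      intro z hz
      rw [hGeq z hz, hFeq _ (hψm hz), hφψ z hz]
    have hG0 : G 0 = 0 := by
      by_contra h0
      have hG0ball : G 0 ∈ ball (0:ℂ) 1 := mem_ball_zero_iff.2 (hGlt 0 (by simp))
      have hG0Ω : G 0 ∈ Ω := hmemΩ _ hG0ball h0
      have hFc : ContinuousAt F (G 0) := (hFd.differentiableAt
        (isOpen_ball.mem_nhds hG0ball)).continuousAt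
      have hGc : ContinuousAt G 0 := (hGd.differentiableAt hball).continuousAt
      have ht1 : Filter.Tendsto (fun z => F (G z)) (𝓝[≠] (0:ℂ)) (𝓝 (F (G 0))) :=
        ((hFc.comp hGc).tendsto).mono_left nhdsWithin_le_nhds
      have ht2 : Filter.Tendsto (fun z => F (G z)) (𝓝[≠] (0:ℂ)) (𝓝 0) := by
        have : ∀ᶠ z in 𝓝[≠] (0:ℂ), F (G z) = z := by
          filter_upwards [self_mem_nhdsWithin, nhdsWithin_le_nhds hball] with w hw1 hw2
          exact hFG w (hmemΩ w hw2 hw1)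
        exact Filter.Tendsto.congr' (Filter.EventuallyEq.symm this)
          (Filter.tendsto_id.mono_left nhdsWithin_le_nhds)
      have heq : F (G 0) = 0 := tendsto_nhds_unique ht1 ht2
      rw [hFeq _ hG0Ω] at heq
      have := (hφm hG0Ω).1
      rw [heq] at this
      simp at this
    have hSchwarzG : ∀ z : ℂ, z ∈ ball (0:ℂ) 1 → ‖G z‖ ≤ ‖z‖ := by
      intro z hz
      have := Complex.norm_le_norm_of_mapsTo_ball hGd
        (hGmaps.mono_right ball_subset_closedBall) hG0 (mem_ball_zero_iff.1 hz)
      exact this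
    -- equality: ‖F z‖ = ‖z‖ on Ω
    have hnorm : ∀ z ∈ Ω, ‖F z‖ = ‖z‖ := by
      intro z hz
      have hzball : z ∈ ball (0:ℂ) 1 := by rw [hΩ'] at hz; exact hz.1
      refine le_antisymm (hSchwarzF z hzball) ?_
      calc ‖z‖ = ‖G (F z)‖ := by rw [hGF z hz]
        _ ≤ ‖F z‖ := hSchwarzG _ (hFmaps hzball)
    -- dslope argument
    set g : ℂ → ℂ := dslope F 0 with hg
    have hgd : DifferentiableOn ℂ g (ball 0 1) :=
      (differentiableOn_dslope hball).mpr hFd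
    have hgΩ : ∀ z ∈ Ω, g z = F z / z := by
      intro z hz
      have hz0 : z ≠ 0 := by
        intro h; rw [h] at hz; simp [hΩdef] at hz
      rw [hg, dslope_of_ne _ hz0, slope_def_field, hF0]
      simp [div_eq_iff hz0]
    have hgnorm : ∀ z ∈ Ω, ‖g z‖ = 1 := by
      intro z hz
      have hz0 : ‖z‖ ≠ 0 := ne_of_gt hz.1
      rw [hgΩ z hz, norm_div, hnorm z hz, div_self hz0]
    have hgle : ∀ w ∈ ball (0:ℂ) 1, ‖g w‖ ≤ 1 := by
      intro w hw
      rcases eq_or_ne w 0 with rfl | hw0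
      · have hgc : ContinuousAt g 0 := (hgd.differentiableAt hball).continuousAt
        have h1 : ∀ᶠ z in 𝓝[≠] (0:ℂ), ‖g z‖ ≤ 1 := by
          filter_upwards [self_mem_nhdsWithin, nhdsWithin_le_nhds hball] with z hz1 hz2
          exact le_of_eq (hgnorm z (hmemΩ z hz2 hz1))
        exact le_of_tendsto ((hgc.norm.tendsto).mono_left nhdsWithin_le_nhds) h1
      · exact le_of_eq (hgnorm w (hmemΩ w hw hw0))
    have hhalf : (1/2 : ℂ) ∈ Ω := by constructor <;> norm_num
    have hhalfball : (1/2 : ℂ) ∈ ball (0:ℂ) 1 := by rw [hΩ'] at hhalf; exact hhalf.1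
    have hmax : IsMaxOn (norm ∘ g) (ball (0:ℂ) 1) (1/2) := by
      intro w hw
      simp only [comp_apply]
      rw [hgnorm _ hhalf]
      exact hgle w hw
    have hconst := eqOn_of_isPreconnected_of_isMaxOn_norm
      (convex_ball (0:ℂ) 1).isPreconnected isOpen_ball hgd hhalfball hmax
    refine ⟨g (1/2), hgnorm _ hhalf, ?_⟩
    intro z hz
    have hzball : z ∈ ball (0:ℂ) 1 := by rw [hΩ'] at hz; exact hz.1
    have hz0 : z ≠ 0 := by
      intro h; rw [h] at hz; simp [hΩdef] at hz
    have h1 : g z = g (1/2) := hconst hzball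
    have h2 := hgΩ z hz
    rw [h1, eq_div_iff hz0] at h2
    rw [← hFeq z hz]
    exact h2.symm
  · rintro ⟨lam, hlam, hφeq⟩
    have hlam0 : lam ≠ 0 := by
      intro h; rw [h] at hlam; simp at hlam
    have hmapsΩ : ∀ (c : ℂ), ‖c‖ = 1 → ∀ z ∈ Ω, c * z ∈ Ω := by
      intro c hc z hz
      constructor
      · rw [norm_mul, hc, one_mul]; exact hz.1
      · rw [norm_mul, hc, one_mul]; exact hz.2
    refine ⟨?_, ?_, fun z => lam⁻¹ * z, ?_, ?_, ?_, ?_⟩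
    · exact (differentiable_id.const_mul lam).differentiableOn.congr hφeq
    · intro z hz
      rw [hφeq z hz]
      exact hmapsΩ lam hlam z hz
    · exact (differentiable_id.const_mul lam⁻¹).differentiableOn
    · intro z hz
      exact hmapsΩ lam⁻¹ (by rw [norm_inv, hlam]; norm_num) z hz
    · intro z hz
      rw [hφeq z hz]
      field_simp
    · intro z hz
      have hψz : lam⁻¹ * z ∈ Ω := hmapsΩ lam⁻¹ (by rw [norm_inv, hlam]; norm_num) z hz
      rw [hφeq _ hψz]
      field_simp
end

section
/- Let B be a Banach space of holomorphic functions on a domain Ω ⊆ ℂⁿ (n > 1) with bounded point evaluations that are nonzero at every point and linearly independent at distinct points. Let ψ be a holomorphic function with M_ψ bounded on B and φ a holomorphic self-map of Ω with C_φ bounded on B. If the weighted composition operator W_{ψ,φ} = M_ψ C_φ is Fredholm on B, then ψ has no zeros in Ω. -/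
/-- A bounded operator on a Banach space is Fredholm if it has closed range,
finite-dimensional kernel, and the kernel of its Banach adjoint is finite-dimensional. -/
def IsFredholm {B : Type*} [NormedAddCommGroup B] [NormedSpace ℂ B]
    (T : B →L[ℂ] B) : Prop :=
  IsClosed (Set.range T) ∧ FiniteDimensional ℂ (LinearMap.ker (T : B →ₗ[ℂ] B)) ∧
    FiniteDimensional ℂ
      (LinearMap.ker (((ContinuousLinearMap.compL ℂ B B ℂ).flip T :
        (B →L[ℂ] ℂ) →L[ℂ] B →L[ℂ] ℂ) : (B →L[ℂ] ℂ) →ₗ[ℂ] B →L[ℂ] ℂ))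

set_option maxHeartbeats 800000

open Metric

lemma zero_set_infinite {n : ℕ} (hn : 1 < n) (Ω : Set (Fin n → ℂ)) (hΩ : IsOpen Ω)
    (ψ : (Fin n → ℂ) → ℂ) (hψ : DifferentiableOn ℂ ψ Ω)
    (z₀ : Fin n → ℂ) (hz₀ : z₀ ∈ Ω) (h0 : ψ z₀ = 0) :
    {z | z ∈ Ω ∧ ψ z = 0}.Infinite := by
  by_contra hfin
  rw [Set.not_infinite] at hfin
  -- a radius ρ with ball z₀ ρ ⊆ Ω and no other zero of ψ in it
  obtain ⟨R₁, hR₁, hball₁⟩ := Metric.isOpen_iff.mp hΩ z₀ hz₀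
  have hFcl : IsClosed ({z | z ∈ Ω ∧ ψ z = 0} \ {z₀}) := hfin.diff.isClosed
  have hz₀F : z₀ ∈ ({z | z ∈ Ω ∧ ψ z = 0} \ {z₀})ᶜ := by simp
  obtain ⟨R₂, hR₂, hball₂⟩ := Metric.isOpen_iff.mp hFcl.isOpen_compl z₀ hz₀F
  set ρ : ℝ := min R₁ R₂ with hρdef
  have hρ : 0 < ρ := lt_min hR₁ hR₂
  set r : ℝ := ρ / 4 with hrdef
  have hr : 0 < r := by positivity
  -- two coordinate directions
  set i0 : Fin n := ⟨0, by omega⟩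
  set i1 : Fin n := ⟨1, by omega⟩
  have hi01 : i0 ≠ i1 := by simp [i0, i1, Fin.ext_iff]
  set e₁ : Fin n → ℂ := Pi.single i0 1 with he₁
  set e₂ : Fin n → ℂ := Pi.single i1 1 with he₂
  have hnorme : ∀ (i : Fin n) , ‖(Pi.single i 1 : Fin n → ℂ)‖ ≤ 1 := by
    intro i
    rw [pi_norm_le_iff_of_nonneg zero_le_one]
    intro j
    rcases eq_or_ne j i with h | h
    · subst h; rw [Pi.single_eq_same]; norm_num
    · simp [Pi.single_eq_of_ne h]
  set p : ℂ → ℂ → (Fin n → ℂ) := fun s t => z₀ + s • e₁ + t • e₂ with hp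
  have hpmem : ∀ s t : ℂ, ‖s‖ ≤ r → ‖t‖ ≤ r → p s t ∈ ball z₀ ρ := by
    intro s t hs ht
    rw [mem_ball, dist_eq_norm]
    have : p s t - z₀ = s • e₁ + t • e₂ := by simp [hp]; abel
    rw [this]
    calc ‖s • e₁ + t • e₂‖ ≤ ‖s • e₁‖ + ‖t • e₂‖ := norm_add_le _ _
      _ ≤ ‖s‖ * 1 + ‖t‖ * 1 := by
          rw [norm_smul, norm_smul]
          gcongr
          exacts [hnorme i0, hnorme i1]
      _ ≤ r + r := by simpa using add_le_add hs ht
      _ < ρ := by rw [hrdef]; linarith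
  have hballΩ : ball z₀ ρ ⊆ Ω := fun z hz => hball₁ (ball_subset_ball (min_le_left _ _) hz)
  -- only zero in the slice region is at s = t = 0
  have hzero : ∀ s t : ℂ, ‖s‖ ≤ r → ‖t‖ ≤ r → ψ (p s t) = 0 → s = 0 ∧ t = 0 := by
    intro s t hs ht hz
    have hmem := hpmem s t hs ht
    have h1 : p s t ∈ ball z₀ R₂ := ball_subset_ball (min_le_right _ _) hmem
    have h2 := hball₂ h1
    have h3 : p s t = z₀ := by
      by_contra hne
      exact h2 ⟨⟨hballΩ hmem, hz⟩, hne⟩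
    have h4 : s • e₁ + t • e₂ = 0 := by
      have h6 := h3
      simp only [hp] at h6
      have h5 : z₀ + (s • e₁ + t • e₂) = z₀ := by rw [← add_assoc]; exact h6
      exact add_eq_left.mp h5
    constructor
    · have := congrFun h4 i0
      simpa [he₁, he₂, Pi.single_eq_same, Pi.single_eq_of_ne hi01,
        Pi.single_eq_of_ne hi01.symm] using this
    · have := congrFun h4 i1
      simpa [he₁, he₂, Pi.single_eq_same, Pi.single_eq_of_ne hi01,
        Pi.single_eq_of_ne hi01.symm] using this
  -- differentiability of slices
  have hdiffp : ∀ t : ℂ, Differentiable ℂ (fun s : ℂ => p s t) := by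
    intro t
    apply Differentiable.add
    apply Differentiable.add (differentiable_const _)
    · exact differentiable_id.smul_const e₁
    · exact differentiable_const _
  have hdiff : ∀ s t : ℂ, ‖s‖ ≤ r → ‖t‖ ≤ r →
      DifferentiableAt ℂ (fun s' => ψ (p s' t)) s := by
    intro s t hs ht
    have h1 : DifferentiableAt ℂ ψ (p s t) :=
      hψ.differentiableAt (hΩ.mem_nhds (hballΩ (hpmem s t hs ht)))
    exact h1.comp s ((hdiffp t) s)
  -- minimum of ‖ψ ∘ p‖ on the compact set sphere × closedBall
  set S : Set (ℂ × ℂ) := sphere (0:ℂ) r ×ˢ closedBall (0:ℂ) r with hS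
  have hScomp : IsCompact S := (isCompact_sphere _ _).prod (isCompact_closedBall _ _)
  have hSne : S.Nonempty := by
    refine ⟨((r:ℂ), 0), ?_, ?_⟩
    · simp [Complex.norm_real, abs_of_pos hr]
    · simp [hr.le]
  have hcont : ContinuousOn (fun q : ℂ × ℂ => ‖ψ (p q.1 q.2)‖) S := by
    apply ContinuousOn.norm
    apply hψ.continuousOn.comp
    · exact (Continuous.continuousOn (by fun_prop))
    · intro q hq
      obtain ⟨hq1, hq2⟩ := hq
      rw [mem_sphere_zero_iff_norm] at hq1
      rw [mem_closedBall_zero_iff] at hq2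
      exact hballΩ (hpmem _ _ hq1.le hq2)
  obtain ⟨q₀, hq₀S, hq₀min'⟩ := hScomp.exists_isMinOn hSne hcont
  have hq₀min : ∀ q ∈ S, ‖ψ (p q₀.1 q₀.2)‖ ≤ ‖ψ (p q.1 q.2)‖ := fun q hq => hq₀min' hq
  set δ : ℝ := ‖ψ (p q₀.1 q₀.2)‖ with hδ
  have hq₀1 : ‖q₀.1‖ = r := mem_sphere_zero_iff_norm.mp hq₀S.1
  have hq₀2 : ‖q₀.2‖ ≤ r := mem_closedBall_zero_iff.mp hq₀S.2
  have hδpos : 0 < δ := by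
    rw [hδ, norm_pos_iff]
    intro hzz
    have := (hzero _ _ hq₀1.le hq₀2 hzz).1
    rw [this] at hq₀1
    simp at hq₀1
    linarith
  -- pick t₀ small with |ψ (p 0 t₀)| < δ, t₀ ≠ 0
  have hg0 : ψ (p 0 0) = 0 := by
    have : p 0 0 = z₀ := by simp [hp]
    rw [this, h0]
  have hgc : ContinuousAt (fun t => ψ (p 0 t)) 0 := by
    have h1 : DifferentiableAt ℂ ψ (p 0 0) :=
      hψ.differentiableAt (hΩ.mem_nhds (hballΩ (hpmem 0 0 (by simp [hr.le]) (by simp [hr.le]))))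
    have h2 : Differentiable ℂ (fun t : ℂ => p 0 t) := by
      apply Differentiable.add
      apply Differentiable.add (differentiable_const _) (differentiable_const _)
      exact differentiable_id.smul_const e₂
    exact (h1.comp 0 (h2 0)).continuousAt
  rw [Metric.continuousAt_iff] at hgc
  obtain ⟨η, hη, hηδ⟩ := hgc δ hδpos
  set t₀ : ℂ := ((min η r / 2 : ℝ) : ℂ) with ht₀
  have hmin : 0 < min η r := lt_min hη hr
  have ht₀norm : ‖t₀‖ = min η r / 2 := by
    rw [ht₀, Complex.norm_real, Real.norm_of_nonneg (by positivity)]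
  have ht₀r : ‖t₀‖ ≤ r := by rw [ht₀norm]; have := min_le_right η r; linarith
  have ht₀ne : t₀ ≠ 0 := by
    intro h
    rw [h] at ht₀norm
    simp at ht₀norm
    linarith
  have ht₀small : ‖ψ (p 0 t₀)‖ < δ := by
    have : dist t₀ 0 < η := by
      rw [dist_zero_right, ht₀norm]
      have := min_le_left η r; linarith
    have := hηδ this
    rwa [dist_eq_norm, hg0, sub_zero] at this
  have hpne : ψ (p 0 t₀) ≠ 0 := by
    intro h
    exact ht₀ne (hzero 0 t₀ (by simp [hr.le]) ht₀r h).2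
  -- maximum modulus on u = (ψ ∘ p (·, t₀))⁻¹
  set u : ℂ → ℂ := fun s => (ψ (p s t₀))⁻¹ with hu
  have hudiff : DifferentiableOn ℂ u (closedBall 0 r) := by
    intro s hs
    rw [mem_closedBall_zero_iff] at hs
    have h1 : ψ (p s t₀) ≠ 0 := by
      intro h
      exact ht₀ne (hzero s t₀ hs ht₀r h).2
    exact ((hdiff s t₀ hs ht₀r).inv h1).differentiableWithinAt
  have hcl : closure (ball (0:ℂ) r) = closedBall 0 r := closure_ball 0 hr.ne'
  have hdcc : DiffContOnCl ℂ u (ball 0 r) := by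
    apply DifferentiableOn.diffContOnCl
    rwa [hcl]
  have hfr : ∀ s ∈ frontier (ball (0:ℂ) r), ‖u s‖ ≤ δ⁻¹ := by
    intro s hs
    rw [frontier_ball 0 hr.ne'] at hs
    rw [mem_sphere_zero_iff_norm] at hs
    have hmemS : (s, t₀) ∈ S := by
      constructor
      · rwa [mem_sphere_zero_iff_norm]
      · rwa [mem_closedBall_zero_iff]
    have hge : δ ≤ ‖ψ (p s t₀)‖ := hq₀min (s, t₀) hmemS
    rw [hu]
    simp only [norm_inv]
    exact inv_anti₀ hδpos hge
  have h0cl : (0:ℂ) ∈ closure (ball (0:ℂ) r) := by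
    rw [hcl]; simp [hr.le]
  have hfinal := Complex.norm_le_of_forall_mem_frontier_norm_le isBounded_ball hdcc hfr h0cl
  -- contradiction
  rw [hu] at hfinal
  simp only [norm_inv] at hfinal
  have h1 : 0 < ‖ψ (p 0 t₀)‖ := norm_pos_iff.mpr hpne
  have h2 : δ⁻¹ < ‖ψ (p 0 t₀)‖⁻¹ := by
    apply inv_strictAnti₀ h1 ht₀small
  linarith

private lemma fredholm_part {n : ℕ}
    (Ω : Set (Fin n → ℂ))
    (B : Type*) [NormedAddCommGroup B] [NormedSpace ℂ B] [CompleteSpace B]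
    (ev : B →ₗ[ℂ] ((Fin n → ℂ) → ℂ))
    (K : (Fin n → ℂ) → (B →L[ℂ] ℂ))
    (hK : ∀ z ∈ Ω, ∀ f : B, K z f = ev f z)
    (hsep : ∀ (m : ℕ) (a : Fin m → (Fin n → ℂ)), (∀ i, a i ∈ Ω) →
      Function.Injective a → LinearIndependent ℂ (fun i => K (a i)))
    (ψ : (Fin n → ℂ) → ℂ)
    (Mψ : B →L[ℂ] B) (hMψ : ∀ f : B, ∀ z ∈ Ω, ev (Mψ f) z = ψ z * ev f z)
    (Cφ : B →L[ℂ] B)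
    (hFD : FiniteDimensional ℂ
      (LinearMap.ker (((ContinuousLinearMap.compL ℂ B B ℂ).flip (Mψ.comp Cφ) :
        (B →L[ℂ] ℂ) →L[ℂ] B →L[ℂ] ℂ) : (B →L[ℂ] ℂ) →ₗ[ℂ] B →L[ℂ] ℂ)))
    (hinf : {z | z ∈ Ω ∧ ψ z = 0}.Infinite) : False := by
  set T' := (((ContinuousLinearMap.compL ℂ B B ℂ).flip (Mψ.comp Cφ) :
        (B →L[ℂ] ℂ) →L[ℂ] B →L[ℂ] ℂ) : (B →L[ℂ] ℂ) →ₗ[ℂ] B →L[ℂ] ℂ) with hT'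
  have hker : ∀ z ∈ Ω, ψ z = 0 → K z ∈ LinearMap.ker T' := by
    intro z hz h0
    rw [LinearMap.mem_ker]
    apply ContinuousLinearMap.ext
    intro f
    simp only [hT', ContinuousLinearMap.coe_coe, ContinuousLinearMap.flip_apply, ContinuousLinearMap.compL_apply,
      ContinuousLinearMap.comp_apply, ContinuousLinearMap.zero_apply,
      ContinuousLinearMap.coe_comp', Function.comp_apply]
    rw [hK z hz, hMψ _ z hz, h0, zero_mul]
  set d := Module.finrank ℂ (LinearMap.ker T') with hd
  obtain e := hinf.natEmbedding
  set a : Fin (d + 1) → (Fin n → ℂ) := fun i => (e i.val : _) with ha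
  have haΩ : ∀ i, a i ∈ Ω := fun i => (e i.val).2.1
  have haZ : ∀ i, ψ (a i) = 0 := fun i => (e i.val).2.2
  have hainj : Function.Injective a := by
    intro i j hij
    have := e.injective (Subtype.ext hij)
    exact Fin.ext (by omega)
  have hli : LinearIndependent ℂ (fun i => K (a i)) := hsep (d + 1) a haΩ hainj
  set v : Fin (d + 1) → LinearMap.ker T' := fun i => ⟨K (a i), hker _ (haΩ i) (haZ i)⟩ with hv
  have hliv : LinearIndependent ℂ v := by
    apply LinearIndependent.of_comp (LinearMap.ker T').subtype
    exact hli
  have := hliv.fintype_card_le_finrank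
  simp [hd] at this

/-- In dimension n > 1, if the weighted composition operator
W_{ψ,φ} = M_ψ C_φ is Fredholm on a Banach space of holomorphic functions with bounded,
nonzero, linearly independent point evaluations, then ψ has no zeros in Ω. -/
theorem stmt_14 {n : ℕ} (hn : 1 < n)
    (Ω : Set (Fin n → ℂ)) (hΩ : IsOpen Ω) (hconn : IsConnected Ω)
    (hbdd : Bornology.IsBounded Ω)
    (B : Type*) [NormedAddCommGroup B] [NormedSpace ℂ B] [CompleteSpace B]
    (ev : B →ₗ[ℂ] ((Fin n → ℂ) → ℂ))
    (hHol : ∀ f : B, DifferentiableOn ℂ (ev f) Ω)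
    (K : (Fin n → ℂ) → (B →L[ℂ] ℂ))
    (hK : ∀ z ∈ Ω, ∀ f : B, K z f = ev f z)
    (hKne : ∀ z ∈ Ω, K z ≠ 0)
    (hsep : ∀ (m : ℕ) (a : Fin m → (Fin n → ℂ)), (∀ i, a i ∈ Ω) →
      Function.Injective a → LinearIndependent ℂ (fun i => K (a i)))
    (ψ : (Fin n → ℂ) → ℂ) (hψHol : DifferentiableOn ℂ ψ Ω)
    (Mψ : B →L[ℂ] B) (hMψ : ∀ f : B, ∀ z ∈ Ω, ev (Mψ f) z = ψ z * ev f z)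
    (φ : (Fin n → ℂ) → (Fin n → ℂ)) (hφΩ : Set.MapsTo φ Ω Ω)
    (hφHol : DifferentiableOn ℂ φ Ω)
    (Cφ : B →L[ℂ] B) (hCφ : ∀ f : B, ∀ z ∈ Ω, ev (Cφ f) z = ev f (φ z))
    (hFred : IsFredholm (Mψ.comp Cφ)) :
    ∀ z ∈ Ω, ψ z ≠ 0 := by
  intro z hz hzero
  have hinf := zero_set_infinite hn Ω hΩ ψ hψHol z hz hzero
  exact fredholm_part Ω B ev K hK hsep ψ Mψ hMψ Cφ hFred.2.2 hinf
end
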